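/- Let {h^i}_{i=1}^d be a Gray code in {0,1}^t for a generalized 1D-ordered family 𝒮 = {S^i}_{i=1}^d, with X^i = S^i \ ∪_{j≠i} S^j and Y^i = S^i ∩ S^{i+1}. Then with L^j, R^j as in the Gray code biclique construction: X^i ⊆ L^j if and only if h^i_j = 0, X^i ⊆ R^j if and only if h^i_j = 1, Y^i ⊆ L^j if and only if h^i_j = h^{i+1}_j = 0, and Y^i ⊆ R^j if and only if h^i_j = h^{i+1}_j = 1. -/
import Mathlib


/-- A Gray code for `d` numbers. -/
def IsGrayCode (d t : ℕ) (h : ℕ → Fin t → Bool) : Prop :=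
  (∀ i j, i < d → j < d → i ≠ j → h i ≠ h j) ∧
  (∀ i, i + 1 < d → (Finset.univ.filter fun j => h i j ≠ h (i + 1) j).card = 1)

/-- `X^i`: elements of `S i` lying in no other piece. -/
def Xset {α : Type*} [DecidableEq α] (d : ℕ) (S : ℕ → Finset α) (i : ℕ) : Finset α :=
  S i \ ((Finset.range d).filter (· ≠ i)).biUnion S

/-- `Y^i = S^i ∩ S^{i+1}`. -/
def Yset {α : Type*} [DecidableEq α] (S : ℕ → Finset α) (i : ℕ) : Finset α :=
  S i ∩ S (i + 1)

/-- `L^j` of the Gray code biclique construction. -/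
def Lset {α : Type*} [DecidableEq α] (d t : ℕ) (S : ℕ → Finset α)
    (h : ℕ → Fin t → Bool) (j : Fin t) : Finset α :=
  ((Finset.range d).filter fun i => h i j = false).biUnion S \
    ((Finset.range d).filter fun i => h i j = true).biUnion S

/-- `R^j` of the Gray code biclique construction. -/
def Rset {α : Type*} [DecidableEq α] (d t : ℕ) (S : ℕ → Finset α)
    (h : ℕ → Fin t → Bool) (j : Fin t) : Finset α :=
  ((Finset.range d).filter fun i => h i j = true).biUnion S \
    ((Finset.range d).filter fun i => h i j = false).biUnion S

/-- For a generalized 1D-ordered family with nonempty `X^i` and `Y^i`: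
`X^i ⊆ L^j ↔ h^i_j = 0`, `X^i ⊆ R^j ↔ h^i_j = 1`,
`Y^i ⊆ L^j ↔ h^i_j = h^{i+1}_j = 0`, `Y^i ⊆ R^j ↔ h^i_j = h^{i+1}_j = 1`. -/
theorem gray_code_piece_membership {α : Type*} [DecidableEq α] (d t : ℕ)
    (S : ℕ → Finset α)
    (hord : ∀ i j, i < d → j < d → i + 2 ≤ j → S i ∩ S j = ∅)
    (h : ℕ → Fin t → Bool) (hg : IsGrayCode d t h)
    (hX : ∀ i, i < d → (Xset d S i).Nonempty)
    (hY : ∀ i, i + 1 < d → (Yset S i).Nonempty)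
    (j : Fin t) :
    (∀ i, i < d →
      ((Xset d S i ⊆ Lset d t S h j ↔ h i j = false) ∧
       (Xset d S i ⊆ Rset d t S h j ↔ h i j = true))) ∧
    (∀ i, i + 1 < d →
      ((Yset S i ⊆ Lset d t S h j ↔ (h i j = false ∧ h (i + 1) j = false)) ∧
       (Yset S i ⊆ Rset d t S h j ↔ (h i j = true ∧ h (i + 1) j = true)))) := by
  classical
  -- disjointness helper
  have hdisj : ∀ a b, a < d → b < d → a + 2 ≤ b → ∀ x, x ∈ S a → x ∉ S b := by
    intro a b ha hb hab x hxa hxb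
    have : x ∈ S a ∩ S b := Finset.mem_inter.mpr ⟨hxa, hxb⟩
    rw [hord a b ha hb hab] at this
    exact absurd this (Finset.notMem_empty x)
  have hXmem : ∀ i, ∀ y ∈ Xset d S i, y ∈ S i ∧ ∀ k, k < d → k ≠ i → y ∉ S k := by
    intro i y hy
    simp only [Xset, Finset.mem_sdiff, Finset.mem_biUnion, Finset.mem_filter,
      Finset.mem_range] at hy
    exact ⟨hy.1, fun k hk hki hyk => hy.2 ⟨k, ⟨hk, hki⟩, hyk⟩⟩
  have hYmem : ∀ i, i + 1 < d → ∀ y ∈ Yset S i,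
      y ∈ S i ∧ y ∈ S (i+1) ∧ ∀ k, k < d → k ≠ i → k ≠ i + 1 → y ∉ S k := by
    intro i hi1 y hy
    have hi : i < d := Nat.lt_of_succ_lt hi1
    rw [Yset, Finset.mem_inter] at hy
    refine ⟨hy.1, hy.2, fun k hk hki hki1 hyk => ?_⟩
    rcases Nat.lt_or_ge k i with hlt | hge
    · exact hdisj k (i+1) hk hi1 (by omega) y hyk hy.2
    · have : i + 2 ≤ k := by omega
      exact hdisj i k hi hk this y hy.1 hyk
  -- generic membership in L / R
  constructor
  · intro i hi
    obtain ⟨x, hxmem⟩ := hX i hi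
    have key : ∀ (b : Bool),
        Xset d S i ⊆
          ((Finset.range d).filter fun k => h k j = b).biUnion S \
            ((Finset.range d).filter fun k => h k j = !b).biUnion S ↔ h i j = b := by
      intro b
      constructor
      · intro hsub
        have hx := hsub hxmem
        simp only [Finset.mem_sdiff, Finset.mem_biUnion, Finset.mem_filter,
          Finset.mem_range] at hx
        obtain ⟨⟨k, ⟨hk, hkj⟩, hxk⟩, _⟩ := hx
        rcases eq_or_ne k i with rfl | hne
        · exact hkj
        · exact absurd hxk ((hXmem i x hxmem).2 k hk hne)
      · intro hij y hy
        obtain ⟨hyS, hyn⟩ := hXmem i y hy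
        simp only [Finset.mem_sdiff, Finset.mem_biUnion, Finset.mem_filter, Finset.mem_range]
        refine ⟨⟨i, ⟨hi, hij⟩, hyS⟩, ?_⟩
        rintro ⟨k, ⟨hk, hkj⟩, hyk⟩
        rcases eq_or_ne k i with rfl | hne
        · rw [hij] at hkj; simp at hkj
        · exact hyn k hk hne hyk
    exact ⟨key false, key true⟩
  · intro i hi1
    have hi : i < d := Nat.lt_of_succ_lt hi1
    obtain ⟨x, hxmem⟩ := hY i hi1
    have key : ∀ (b : Bool),
        Yset S i ⊆
          ((Finset.range d).filter fun k => h k j = b).biUnion S \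
            ((Finset.range d).filter fun k => h k j = !b).biUnion S ↔
          (h i j = b ∧ h (i+1) j = b) := by
      intro b
      obtain ⟨hx1, hx2, -⟩ := hYmem i hi1 x hxmem
      constructor
      · intro hsub
        have hx := hsub hxmem
        simp only [Finset.mem_sdiff, Finset.mem_biUnion, Finset.mem_filter,
          Finset.mem_range] at hx
        have h1 : h i j = b := by
          cases hb : h i j
          · cases b
            · rfl
            · exact absurd ⟨i, ⟨hi, by simp [hb]⟩, hx1⟩ hx.2
          · cases b
            · exact absurd ⟨i, ⟨hi, by simp [hb]⟩, hx1⟩ hx.2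
            · rfl
        have h2 : h (i+1) j = b := by
          cases hb : h (i+1) j
          · cases b
            · rfl
            · exact absurd ⟨i+1, ⟨hi1, by simp [hb]⟩, hx2⟩ hx.2
          · cases b
            · exact absurd ⟨i+1, ⟨hi1, by simp [hb]⟩, hx2⟩ hx.2
            · rfl
        exact ⟨h1, h2⟩
      · rintro ⟨h1, h2⟩ y hy
        obtain ⟨hy1, hy2, hyn⟩ := hYmem i hi1 y hy
        simp only [Finset.mem_sdiff, Finset.mem_biUnion, Finset.mem_filter, Finset.mem_range]
        refine ⟨⟨i, ⟨hi, h1⟩, hy1⟩, ?_⟩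
        rintro ⟨k, ⟨hk, hkj⟩, hyk⟩
        rcases eq_or_ne k i with rfl | hne
        · rw [h1] at hkj; simp at hkj
        rcases eq_or_ne k (i+1) with rfl | hne1
        · rw [h2] at hkj; simp at hkj
        · exact hyn k hk hne hne1 hyk
    exact ⟨key false, key true⟩
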